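/- For every integer n ≥ 2, c_n(d) > 0 for all d ∈ (0, π). -/

import Mathlib

open Real

noncomputable def Sn (n : ℕ) (d : ℝ) : ℝ :=
  ((n : ℝ) * ∫ s in (0:ℝ)..d, Real.sin s ^ (n - 1)) ^ ((1 : ℝ) / n)

noncomputable def cn (n : ℕ) (d : ℝ) : ℝ :=
  (n : ℝ) - Real.sin d ^ (n - 1) / Sn n d ^ (n - 1) - ((n : ℝ) - 1) * Sn n d / Real.tan d

theorem stmt_3 (n : ℕ) (hn : 2 ≤ n) (d : ℝ) (hd : d ∈ Set.Ioo (0:ℝ) Real.pi) :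
    0 < cn n d := by
  obtain ⟨hd0, hdπ⟩ := hd
  have hn0 : n ≠ 0 := by omega
  have hnR : (2:ℝ) ≤ (n:ℝ) := by exact_mod_cast hn
  have hsd : 0 < Real.sin d := Real.sin_pos_of_pos_of_lt_pi hd0 hdπ
  set I : ℝ := ∫ s in (0:ℝ)..d, Real.sin s ^ (n - 1) with hIdef
  have hcont1 : Continuous fun s : ℝ => Real.sin s ^ (n - 1) := Real.continuous_sin.pow _
  have hI : 0 < I := by
    apply intervalIntegral.intervalIntegral_pos_of_pos_on
      (hcont1.intervalIntegrable 0 d)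
    · intro x hx
      exact pow_pos (Real.sin_pos_of_pos_of_lt_pi hx.1 (hx.2.trans hdπ)) _
    · exact hd0
  have hnI : 0 < (n:ℝ) * I := by positivity
  -- FTC: ∫ n sin^{n-1} cos = sin^n d
  have hFTC : (∫ s in (0:ℝ)..d, (n:ℝ) * Real.sin s ^ (n - 1) * Real.cos s)
      = Real.sin d ^ n := by
    have h := intervalIntegral.integral_eq_sub_of_hasDerivAt
      (f := fun x => Real.sin x ^ n)
      (f' := fun x => (n:ℝ) * Real.sin x ^ (n - 1) * Real.cos x)
      (a := 0) (b := d)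
      (fun x _ => (Real.hasDerivAt_sin x).pow n)
      (((continuous_const.mul hcont1).mul Real.continuous_cos).intervalIntegrable 0 d)
    rw [h]; simp [hn0]
  have hhalf1 : 0 < d / 2 := by linarith
  have hhalf2 : d / 2 < d := by linarith
  have hsdh : 0 < Real.sin (d / 2) :=
    Real.sin_pos_of_pos_of_lt_pi hhalf1 (by linarith)
  -- (A) sin d ^ n < n * I
  have hA : Real.sin d ^ n < (n:ℝ) * I := by
    rw [← hFTC, hIdef, ← intervalIntegral.integral_const_mul]
    apply intervalIntegral.integral_lt_integral_of_continuousOn_of_le_of_exists_lt hd0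
      (((continuous_const.mul hcont1).mul Real.continuous_cos).continuousOn)
      ((continuous_const.mul hcont1).continuousOn)
    · intro x hx
      have hs : 0 ≤ Real.sin x :=
        (Real.sin_nonneg_of_nonneg_of_le_pi hx.1.le (hx.2.trans hdπ.le))
      have hc : Real.cos x ≤ 1 := Real.cos_le_one x
      have hp : 0 ≤ (n:ℝ) * Real.sin x ^ (n - 1) := by positivity
      simp only [Pi.mul_apply]
      nlinarith
    · refine ⟨d / 2, ⟨hhalf1.le, hhalf2.le⟩, ?_⟩
      have hc : Real.cos (d / 2) < 1 := by
        have := Real.cos_lt_cos_of_nonneg_of_le_pi le_rfl (by linarith [Real.pi_pos]) hhalf1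
        simpa using this
      have hp : 0 < (n:ℝ) * Real.sin (d / 2) ^ (n - 1) := by positivity
      simp only [Pi.mul_apply]
      nlinarith
  have hSpos : 0 < Sn n d := by
    rw [Sn, ← hIdef]
    exact Real.rpow_pos_of_pos hnI _
  have hsinS : Real.sin d < Sn n d := by
    have h1 : Real.sin d = (Real.sin d ^ n) ^ ((n:ℝ)⁻¹) :=
      (Real.pow_rpow_inv_natCast hsd.le hn0).symm
    rw [Sn, ← hIdef, one_div, h1]
    exact Real.rpow_lt_rpow (by positivity) hA (by positivity)
  have ha : Real.sin d ^ (n - 1) / Sn n d ^ (n - 1) < 1 := by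
    rw [div_lt_one (by positivity)]
    exact pow_lt_pow_left₀ hsinS hsd.le (by omega)
  rw [cn]
  rcases lt_trichotomy d (π / 2) with hlt | heq | hgt
  · -- d < π/2
    have hcd : 0 < Real.cos d := Real.cos_pos_of_mem_Ioo ⟨by linarith, hlt⟩
    -- (B) n * I * cos d < sin d ^ n
    have hB : (n:ℝ) * I * Real.cos d < Real.sin d ^ n := by
      rw [← hFTC, hIdef, mul_comm ((n:ℝ) * _) (Real.cos d), ← intervalIntegral.integral_const_mul,
        ← intervalIntegral.integral_const_mul]
      apply intervalIntegral.integral_lt_integral_of_continuousOn_of_le_of_exists_lt hd0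
        ((continuous_const.mul (continuous_const.mul hcont1)).continuousOn)
        (((continuous_const.mul hcont1).mul Real.continuous_cos).continuousOn)
      · intro x hx
        have hs : 0 ≤ Real.sin x ^ (n - 1) := by
          have := Real.sin_nonneg_of_nonneg_of_le_pi hx.1.le (hx.2.trans hdπ.le)
          positivity
        have hc : Real.cos d ≤ Real.cos x := by
          rcases eq_or_lt_of_le hx.2 with h | h
          · rw [h]
          · exact (Real.cos_lt_cos_of_nonneg_of_le_pi hx.1.le hdπ.le h).le
        have := mul_le_mul_of_nonneg_left hc
          (show (0:ℝ) ≤ (n:ℝ) * Real.sin x ^ (n - 1) by positivity)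
        simp only [Pi.mul_apply]
        nlinarith
      · refine ⟨d / 2, ⟨hhalf1.le, hhalf2.le⟩, ?_⟩
        have hc : Real.cos d < Real.cos (d / 2) :=
          Real.cos_lt_cos_of_nonneg_of_le_pi hhalf1.le hdπ.le hhalf2
        have hp : 0 < (n:ℝ) * Real.sin (d / 2) ^ (n - 1) := by positivity
        simp only [Pi.mul_apply]
        nlinarith
    have hSn : Sn n d ^ n = (n:ℝ) * I := by
      rw [Sn, ← hIdef, one_div]
      exact Real.rpow_inv_natCast_pow hnI.le hn0
    have hScos : Sn n d * Real.cos d < Real.sin d := by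
      have hcd1 : Real.cos d ≤ 1 := Real.cos_le_one d
      have h1 : (Sn n d * Real.cos d) ^ n < Real.sin d ^ n := by
        rw [mul_pow, hSn]
        calc (n:ℝ) * I * Real.cos d ^ n ≤ (n:ℝ) * I * Real.cos d := by
              have : Real.cos d ^ n ≤ Real.cos d := pow_le_of_le_one hcd.le hcd1 hn0
              nlinarith
          _ < Real.sin d ^ n := hB
      exact lt_of_pow_lt_pow_left₀ n hsd.le h1
    have htan : 0 < Real.tan d := Real.tan_pos_of_pos_of_lt_pi_div_two hd0 hlt
    have hStan : Sn n d < Real.tan d := by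
      rw [Real.tan_eq_sin_div_cos, lt_div_iff₀ hcd]
      exact hScos
    have hb : ((n:ℝ) - 1) * Sn n d / Real.tan d < (n:ℝ) - 1 := by
      rw [div_lt_iff₀ htan]
      have h1 : (0:ℝ) < (n:ℝ) - 1 := by linarith
      nlinarith
    linarith
  · -- d = π/2
    rw [heq] at ha ⊢
    rw [Real.tan_pi_div_two, div_zero]
    linarith
  · -- π/2 < d
    have hcd : Real.cos d < 0 :=
      Real.cos_neg_of_pi_div_two_lt_of_lt hgt (by linarith [Real.pi_pos])
    have htan : Real.tan d < 0 := by
      rw [Real.tan_eq_sin_div_cos]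
      exact div_neg_of_pos_of_neg hsd hcd
    have hb : ((n:ℝ) - 1) * Sn n d / Real.tan d < 0 := by
      apply div_neg_of_pos_of_neg _ htan
      have : (0:ℝ) < (n:ℝ) - 1 := by linarith
      positivity
    linarith
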